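/- Symplectic Kirby connection: if the total number v + e of simplices is even, say v + e = 2l, then L² is similar over ℚ to a symplectic matrix; that is, there exist a bijection of S with Fin l ⊕ Fin l and an invertible rational 2l×2l matrix P such that P⁻¹·(L²)·P lies in the symplectic group Sp(2l, ℚ) (the matrices M with MᵀJM = J for the standard symplectic form J). -/

import Mathlib

set_option linter.unusedSectionVars false
set_option linter.unreachableTactic false
set_option linter.unusedTactic false
set_option linter.unnecessarySeqFocus false
set_option maxHeartbeats 1000000


open Matrix

variable {V : Type*} [Fintype V] [DecidableEq V]

/-- The simplices of the 1-dimensional simplicial complex of a graph: vertices and edges. -/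
abbrev Simplex (G : SimpleGraph V) [DecidableRel G.Adj] := V ⊕ G.edgeSet

variable (G : SimpleGraph V) [DecidableRel G.Adj]

/-- The vertex set of a simplex. -/
def sVerts : Simplex G → Set V
  | Sum.inl u => {u}
  | Sum.inr f => {w | w ∈ (f : Sym2 V)}

instance (x : Simplex G) (w : V) : Decidable (w ∈ sVerts G x) :=
  match x with
  | Sum.inl u => decidable_of_iff (w = u) (by simp [sVerts])
  | Sum.inr f => decidable_of_iff (w ∈ (f : Sym2 V)) (by simp [sVerts])

/-- Two simplices touch if their vertex sets intersect. -/
def touches (x y : Simplex G) : Prop := ∃ w, w ∈ sVerts G x ∧ w ∈ sVerts G y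

instance : DecidableRel (touches G) := fun _ _ => Fintype.decidableExistsFintype

/-- The connection Laplacian. -/
def connL : Matrix (Simplex G) (Simplex G) ℤ :=
  Matrix.of fun x y => if touches G x y then 1 else 0

/-- The connection Laplacian as a rational matrix. -/
def connLQ : Matrix (Simplex G) (Simplex G) ℚ := (connL G).map (Int.cast : ℤ → ℚ)


section SymplecticBasis
open Matrix Module LinearMap

private lemma exists_symplectic_basis :
    ∀ (l : ℕ) (W : Type) (_ : AddCommGroup W) (_ : Module ℚ W) (_ : FiniteDimensional ℚ W)
      (B : LinearMap.BilinForm ℚ W), B.IsAlt → B.Nondegenerate → finrank ℚ W = 2 * l →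
      ∃ b : Basis (Fin l ⊕ Fin l) ℚ W, ∀ i j, B (b i) (b j) = Matrix.J (Fin l) ℚ i j := by
  intro l
  induction l with
  | zero =>
    intro W _ _ _ B halt hnd hdim
    have : Subsingleton W := finrank_zero_iff.mp (by simpa using hdim)
    exact ⟨Basis.empty W, fun i => isEmptyElim i⟩
  | succ l IH =>
    intro W _ _ _ B halt hnd hdim
    have hW : Nontrivial W := by
      exact Module.nontrivial_of_finrank_pos (R := ℚ) (M := W) (by omega)
    obtain ⟨x, hx0⟩ := exists_ne (0 : W)
    obtain ⟨y0, hy0⟩ : ∃ y0, B x y0 ≠ 0 := by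
      by_contra hc; push_neg at hc; exact hx0 (hnd.1 x hc)
    set y : W := (-(B x y0)⁻¹) • y0 with hy
    have hBxx : B x x = 0 := halt x
    have hByy : B y y = 0 := halt y
    have hBxy : B x y = -1 := by
      rw [hy, _root_.map_smul, smul_eq_mul]
      field_simp
    have hByx : B y x = 1 := by
      have := LinearMap.IsAlt.neg halt x y
      rw [hBxy] at this; linarith [this]
    have hind : LinearIndependent ℚ ![x, y] := by
      rw [LinearIndependent.pair_iff]
      intro s t hst
      have h1 := congrArg (fun z => B z y) hst
      have h2 := congrArg (fun z => B z x) hst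
      simp only [map_add, LinearMap.map_smul₂, LinearMap.add_apply, LinearMap.smul_apply,
        smul_eq_mul, hBxy, hByy, hByx, hBxx, map_zero, LinearMap.zero_apply] at h1 h2
      constructor <;> linarith
    set U := Submodule.span ℚ (Set.range ![x, y]) with hU
    have hxU : x ∈ U := Submodule.subset_span ⟨0, rfl⟩
    have hyU : y ∈ U := Submodule.subset_span ⟨1, rfl⟩
    have hmem : ∀ z ∈ U, ∃ s t : ℚ, s • x + t • y = z := by
      intro z hz
      rw [hU, show Set.range ![x, y] = {x, y} by
        ext w
        simp only [Matrix.range_cons, Matrix.range_empty, Set.union_empty,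
          Set.mem_insert_iff, Set.mem_singleton_iff, Set.union_singleton]
        tauto ] at hz
      exact Submodule.mem_span_pair.mp hz
    have hdisj : Disjoint U (B.orthogonal U) := by
      rw [Submodule.disjoint_def]
      intro z hzU hzO
      obtain ⟨s, t, rfl⟩ := hmem z hzU
      have h1 : B x (s • x + t • y) = 0 := hzO x hxU
      have h2 : B y (s • x + t • y) = 0 := hzO y hyU
      simp only [map_add, _root_.map_smul, smul_eq_mul, hBxy, hByy, hByx, hBxx] at h1 h2
      have ht : t = 0 := by linarith
      have hs : s = 0 := by linarith
      simp [hs, ht]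
    have hres : (B.restrict U).Nondegenerate :=
      B.nondegenerate_restrict_of_disjoint_orthogonal halt.isRefl hdisj
    have hcompl : IsCompl U (B.orthogonal U) :=
      B.isCompl_orthogonal_of_restrict_nondegenerate halt.isRefl hres
    set O := B.orthogonal U with hO
    have hOnd : (B.restrict O).Nondegenerate := by
      refine (LinearMap.IsAlt.isRefl (B := B.restrict O) (fun z => halt z)).nondegenerate_iff_separatingLeft.mpr ?_
      intro m hm
      have hall : ∀ n : W, B (m : W) n = 0 := by
        intro n
        have hn : n ∈ U ⊔ O := by rw [hcompl.sup_eq_top]; trivial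
        obtain ⟨u, hu, o, ho, rfl⟩ := Submodule.mem_sup.mp hn
        have h1 : B (m : W) u = 0 := halt.isRefl u m (m.2 u hu)
        have h2 : B (m : W) o = 0 := hm ⟨o, ho⟩
        simp [h1, h2]
      exact Subtype.ext (hnd.1 m hall)
    have hfinU : finrank ℚ U = 2 := by
      rw [hU, finrank_span_eq_card hind]; simp
    have hfinO : finrank ℚ O = 2 * l := by
      have := Submodule.finrank_add_eq_of_isCompl hcompl
      rw [hfinU, hdim] at this; omega
    have haltO : (B.restrict O).IsAlt := fun z => halt z
    obtain ⟨bO, hbO⟩ := IH O _ _ (inferInstance : FiniteDimensional ℚ O) (B.restrict O) haltO hOnd hfinO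
    -- assemble
    set bU : Basis (Fin 2) ℚ U := Basis.span hind with hbU
    set bW0 : Basis (Fin 2 ⊕ (Fin l ⊕ Fin l)) ℚ W :=
      (bU.prod bO).map (Submodule.prodEquivOfIsCompl U O hcompl) with hbW0
    have hbW0l : ∀ i : Fin 2, bW0 (Sum.inl i) = (![x, y] i : W) := by
      intro i
      rw [hbW0, Basis.map_apply, Basis.prod_apply]
      simp only [Submodule.coe_prodEquivOfIsCompl', Sum.elim_inl, Function.comp_apply,
        LinearMap.coe_inl, Submodule.coe_add, ZeroMemClass.coe_zero, add_zero, hbU]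
      exact congrArg Subtype.val (Module.Basis.span_apply hind i)
    have hbW0r : ∀ k, bW0 (Sum.inr k) = (bO k : W) := by
      intro k
      rw [hbW0, Basis.map_apply, Basis.prod_apply]
      simp [Submodule.coe_prodEquivOfIsCompl']
    let e : (Fin 2 ⊕ (Fin l ⊕ Fin l)) ≃ (Fin (l + 1) ⊕ Fin (l + 1)) :=
      { toFun := fun s => match s with
          | Sum.inl i => if i = 0 then Sum.inl 0 else Sum.inr 0
          | Sum.inr (Sum.inl i) => Sum.inl i.succ
          | Sum.inr (Sum.inr i) => Sum.inr i.succ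
        invFun := fun s => match s with
          | Sum.inl j => Fin.cases (Sum.inl 0) (fun i => Sum.inr (Sum.inl i)) j
          | Sum.inr j => Fin.cases (Sum.inl 1) (fun i => Sum.inr (Sum.inr i)) j
        left_inv := by
          rintro (i | (i | i))
          · fin_cases i <;> simp
          · simp
          · simp
        right_inv := by
          rintro (j | j) <;> induction j using Fin.cases <;> simp }
    refine ⟨bW0.reindex e, ?_⟩
    have hvl0 : (bW0.reindex e) (Sum.inl 0) = x := by
      rw [Basis.reindex_apply]
      have : e.symm (Sum.inl 0) = Sum.inl 0 := by simp [e]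
      rw [this, hbW0l]; rfl
    have hvr0 : (bW0.reindex e) (Sum.inr 0) = y := by
      rw [Basis.reindex_apply]
      have : e.symm (Sum.inr 0) = Sum.inl 1 := by simp [e]
      rw [this, hbW0l]; rfl
    have hvls : ∀ k : Fin l, (bW0.reindex e) (Sum.inl k.succ) = (bO (Sum.inl k) : W) := by
      intro k
      rw [Basis.reindex_apply]
      have : e.symm (Sum.inl k.succ) = Sum.inr (Sum.inl k) := by simp [e]
      rw [this, hbW0r]
    have hvrs : ∀ k : Fin l, (bW0.reindex e) (Sum.inr k.succ) = (bO (Sum.inr k) : W) := by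
      intro k
      rw [Basis.reindex_apply]
      have : e.symm (Sum.inr k.succ) = Sum.inr (Sum.inr k) := by simp [e]
      rw [this, hbW0r]
    -- orthogonality facts
    have hxO : ∀ z : O, B x (z : W) = 0 := fun z => z.2 x hxU
    have hyO : ∀ z : O, B y (z : W) = 0 := fun z => z.2 y hyU
    have hOx : ∀ z : O, B (z : W) x = 0 := fun z => halt.isRefl x z (hxO z)
    have hOy : ∀ z : O, B (z : W) y = 0 := fun z => halt.isRefl y z (hyO z)
    have hOO : ∀ j k, B (bO j : W) (bO k : W) = Matrix.J (Fin l) ℚ j k := fun j k => hbO j k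
    intro i j
    rcases i with i | i <;> rcases j with j | j <;>
      induction i using Fin.cases <;> induction j using Fin.cases <;>
      simp [hvl0, hvr0, hvls, hvrs, hBxx, hBxy, hByx, hByy, hxO, hyO, hOx, hOy, hOO,
        Matrix.J, Matrix.one_apply, Fin.succ_inj, Fin.succ_ne_zero,
        (Fin.succ_ne_zero _).symm]

end SymplecticBasis

section Aux
open Matrix Module LinearMap

-- ============ Part B ============

/-- The (unsigned) vertex-edge incidence matrix over ℚ. -/
noncomputable def Nmat : Matrix V G.edgeSet ℚ :=
  Matrix.of fun u f => if u ∈ (f : Sym2 V) then 1 else 0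

lemma connLQ_apply (x y : Simplex G) :
    connLQ G x y = if touches G x y then 1 else 0 := by
  simp only [connLQ, connL, Matrix.map_apply, Matrix.of_apply]
  split_ifs <;> simp

lemma touches_inl_inl (u w : V) : touches G (Sum.inl u) (Sum.inl w) ↔ u = w := by
  constructor
  · rintro ⟨z, hz1, hz2⟩
    simp only [sVerts, Set.mem_singleton_iff] at hz1 hz2
    rw [← hz1, ← hz2]
  · rintro rfl; exact ⟨u, by simp [sVerts], by simp [sVerts]⟩

lemma touches_inl_inr (u : V) (f : G.edgeSet) :
    touches G (Sum.inl u) (Sum.inr f) ↔ u ∈ (f : Sym2 V) := by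
  constructor
  · rintro ⟨z, hz1, hz2⟩
    simp only [sVerts, Set.mem_singleton_iff] at hz1
    subst hz1; exact hz2
  · intro hu; exact ⟨u, by simp [sVerts], hu⟩

lemma touches_inr_inl (u : V) (f : G.edgeSet) :
    touches G (Sum.inr f) (Sum.inl u) ↔ u ∈ (f : Sym2 V) := by
  constructor
  · rintro ⟨z, hz1, hz2⟩
    simp only [sVerts, Set.mem_singleton_iff] at hz2
    subst hz2; exact hz1
  · intro hu; exact ⟨u, hu, by simp [sVerts]⟩

lemma touches_inr_inr (f g : G.edgeSet) :
    touches G (Sum.inr f) (Sum.inr g) ↔ ∃ w, w ∈ (f : Sym2 V) ∧ w ∈ (g : Sym2 V) := by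
  constructor
  · rintro ⟨z, hz1, hz2⟩; exact ⟨z, hz1, hz2⟩
  · rintro ⟨z, hz1, hz2⟩; exact ⟨z, hz1, hz2⟩

lemma edge_sum (f g : G.edgeSet) :
    (∑ u : V, (if u ∈ (f : Sym2 V) then (1 : ℚ) else 0) * (if u ∈ (g : Sym2 V) then 1 else 0))
      = (if touches G (Sum.inr f) (Sum.inr g) then 1 else 0) + (if f = g then 1 else 0) := by
  obtain ⟨fs, hf⟩ := f
  obtain ⟨gs, hg⟩ := g
  induction fs using Sym2.ind with
  | _ a b =>
  induction gs using Sym2.ind with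
  | _ c d =>
  have hab : a ≠ b := G.ne_of_adj (G.mem_edgeSet.mp hf)
  have hcd : c ≠ d := G.ne_of_adj (G.mem_edgeSet.mp hg)
  have hL : (∑ u : V, (if u ∈ s(a, b) then (1 : ℚ) else 0) * (if u ∈ s(c, d) then 1 else 0))
      = ((if a ∈ s(c, d) then (1 : ℚ) else 0) + (if b ∈ s(c, d) then 1 else 0)) := by
    have : ∀ u : V, (if u ∈ s(a, b) then (1 : ℚ) else 0) * (if u ∈ s(c, d) then 1 else 0)
        = (if u = a then (if u ∈ s(c, d) then (1 : ℚ) else 0) else 0)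
          + (if u = b then (if u ∈ s(c, d) then (1 : ℚ) else 0) else 0) := by
      intro u
      by_cases h1 : u = a <;> by_cases h2 : u = b <;>
        simp_all [Sym2.mem_iff] <;> tauto
    rw [Finset.sum_congr rfl fun u _ => this u, Finset.sum_add_distrib]
    rw [Finset.sum_ite_eq' Finset.univ a, Finset.sum_ite_eq' Finset.univ b]
    simp
  rw [hL]
  have htouch : touches G (Sum.inr ⟨s(a,b), hf⟩) (Sum.inr ⟨s(c,d), hg⟩)
      ↔ (a ∈ s(c, d) ∨ b ∈ s(c, d)) := by
    rw [touches_inr_inr]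
    constructor
    · rintro ⟨w, hw1, hw2⟩
      simp only [Sym2.mem_iff] at hw1
      rcases hw1 with rfl | rfl
      · exact Or.inl hw2
      · exact Or.inr hw2
    · rintro (hw | hw)
      · exact ⟨a, by simp [Sym2.mem_iff], hw⟩
      · exact ⟨b, by simp [Sym2.mem_iff], hw⟩
  have heq : (⟨s(a,b), hf⟩ : G.edgeSet) = ⟨s(c,d), hg⟩ ↔ (a ∈ s(c, d) ∧ b ∈ s(c, d)) := by
    rw [Subtype.ext_iff]
    simp only [Sym2.eq_iff, Sym2.mem_iff]
    constructor
    · rintro (⟨rfl, rfl⟩ | ⟨rfl, rfl⟩) <;> simp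
    · rintro ⟨h1 | h1, h2 | h2⟩ <;> subst h1 <;> first
        | (subst h2; simp_all)
        | (try subst h2) <;> simp_all <;> tauto
  rw [if_congr htouch rfl rfl, if_congr heq rfl rfl]
  by_cases h1 : a ∈ s(c, d) <;> by_cases h2 : b ∈ s(c, d) <;> simp [h1, h2]

lemma connLQ_eq :
    connLQ G = fromBlocks 1 (Nmat G) (Nmat G)ᵀ ((Nmat G)ᵀ * Nmat G - 1) := by
  ext x y
  rcases x with u | f <;> rcases y with w | g
  · rw [connLQ_apply, fromBlocks_apply₁₁, Matrix.one_apply]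
    exact if_congr (touches_inl_inl G u w) rfl rfl
  · rw [connLQ_apply, fromBlocks_apply₁₂]
    simp only [Nmat, Matrix.of_apply]
    exact if_congr (touches_inl_inr G u g) rfl rfl
  · rw [connLQ_apply, fromBlocks_apply₂₁]
    simp only [transpose_apply, Nmat, Matrix.of_apply]
    exact if_congr (touches_inr_inl G w f) rfl rfl
  · rw [connLQ_apply, fromBlocks_apply₂₂, Matrix.sub_apply, Matrix.mul_apply, Matrix.one_apply]
    have : ∀ u : V, (Nmat G)ᵀ f u * Nmat G u g
        = (if u ∈ (f : Sym2 V) then (1 : ℚ) else 0) * (if u ∈ (g : Sym2 V) then 1 else 0) := by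
      intro u; rfl
    rw [Finset.sum_congr rfl fun u _ => this u, edge_sum]
    ring

/-- The basic skew form. -/
noncomputable def Kmat : Matrix (Simplex G) (Simplex G) ℚ :=
  fromBlocks 0 (-(Nmat G)) (Nmat G)ᵀ 0

lemma Kmat_transpose : (Kmat G)ᵀ = -(Kmat G) := by
  rw [Kmat, fromBlocks_transpose]
  simp [fromBlocks_neg]

lemma LKL : connLQ G * Kmat G * connLQ G = -(Kmat G) := by
  rw [connLQ_eq, Kmat, fromBlocks_multiply, fromBlocks_multiply]
  rw [show -(fromBlocks 0 (-(Nmat G)) (Nmat G)ᵀ 0) = fromBlocks 0 (Nmat G) (-(Nmat G)ᵀ) 0 by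
    simp [fromBlocks_neg]]
  congr 1 <;>
    simp [Matrix.mul_assoc, Matrix.sub_mul, Matrix.mul_sub, Matrix.mul_one, Matrix.one_mul] <;>
    abel

lemma touches_comm (x y : Simplex G) : touches G x y ↔ touches G y x := by
  constructor <;> rintro ⟨z, h1, h2⟩ <;> exact ⟨z, h2, h1⟩

lemma connLQ_symm : (connLQ G)ᵀ = connLQ G := by
  ext x y
  rw [transpose_apply, connLQ_apply, connLQ_apply]
  exact if_congr (touches_comm G y x) rfl rfl

lemma Msymm : ((connLQ G ^ 2))ᵀ = connLQ G ^ 2 := by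
  rw [pow_two, transpose_mul, connLQ_symm, ← pow_two]

lemma MKM : (connLQ G ^ 2) * Kmat G * (connLQ G ^ 2) = Kmat G := by
  have h := LKL G
  calc (connLQ G ^ 2) * Kmat G * (connLQ G ^ 2)
      = connLQ G * (connLQ G * Kmat G * connLQ G) * connLQ G := by
        rw [pow_two]; noncomm_ring
    _ = connLQ G * (-(Kmat G)) * connLQ G := by rw [h]
    _ = -(connLQ G * Kmat G * connLQ G) := by noncomm_ring
    _ = Kmat G := by rw [h, neg_neg]

lemma Kmat_mulVec_elim (zV : V → ℚ) (zE : G.edgeSet → ℚ) :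
    Kmat G *ᵥ (Sum.elim zV zE) = Sum.elim (-(Nmat G *ᵥ zE)) ((Nmat G)ᵀ *ᵥ zV) := by
  rw [Kmat, fromBlocks_mulVec]
  simp [Matrix.neg_mulVec]

lemma L_mulVec_elim (zV : V → ℚ) (zE : G.edgeSet → ℚ) :
    connLQ G *ᵥ (Sum.elim zV zE)
      = Sum.elim (zV + Nmat G *ᵥ zE)
          ((Nmat G)ᵀ *ᵥ zV + ((Nmat G)ᵀ *ᵥ (Nmat G *ᵥ zE) - zE)) := by
  rw [connLQ_eq, fromBlocks_mulVec]
  simp [Matrix.sub_mulVec, Matrix.mulVec_mulVec]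

lemma ker_fix (z : Simplex G → ℚ) (hz : Kmat G *ᵥ z = 0) :
    (connLQ G ^ 2) *ᵥ z = z := by
  have hzdec : Sum.elim (z ∘ Sum.inl) (z ∘ Sum.inr) = z := Sum.elim_comp_inl_inr z
  rw [← hzdec] at hz
  rw [Kmat_mulVec_elim] at hz
  have h1 : Nmat G *ᵥ (z ∘ Sum.inr) = 0 := by
    funext u
    have hcf := congrFun hz (Sum.inl u)
    simp only [Sum.elim_inl, Pi.zero_apply, Pi.neg_apply, neg_eq_zero] at hcf
    exact hcf
  have h2 : (Nmat G)ᵀ *ᵥ (z ∘ Sum.inl) = 0 := by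
    funext f; exact congrFun hz (Sum.inr f)
  rw [← hzdec, pow_two, ← Matrix.mulVec_mulVec, L_mulVec_elim, h1, h2]
  simp only [Matrix.mulVec_zero, add_zero, zero_add, zero_sub]
  rw [L_mulVec_elim, h2]
  have h1' : Nmat G *ᵥ (-(z ∘ Sum.inr)) = 0 := by
    rw [Matrix.mulVec_neg, h1, neg_zero]
  rw [h1']
  simp

lemma exists_K' (l : ℕ) (h : Fintype.card V + Fintype.card G.edgeSet = 2 * l) :
    ∃ K' : Matrix (Simplex G) (Simplex G) ℚ,
      K'ᵀ = -K' ∧ IsUnit K'.det ∧ (connLQ G ^ 2) * K' * (connLQ G ^ 2) = K' := by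
  classical
  set Wk := LinearMap.ker (Kmat G).mulVecLin with hWkdef
  have hmemWk : ∀ z : Simplex G → ℚ, z ∈ Wk ↔
      ((Nmat G)ᵀ *ᵥ (z ∘ Sum.inl) = 0 ∧ Nmat G *ᵥ (z ∘ Sum.inr) = 0) := by
    intro z
    rw [hWkdef, LinearMap.mem_ker, Matrix.mulVecLin_apply]
    constructor
    · intro h0
      have h0' : Kmat G *ᵥ Sum.elim (z ∘ Sum.inl) (z ∘ Sum.inr) = 0 := by
        rwa [Sum.elim_comp_inl_inr]
      rw [Kmat_mulVec_elim] at h0'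
      constructor
      · funext f; exact congrFun h0' (Sum.inr f)
      · funext u
        have hcf := congrFun h0' (Sum.inl u)
        simp only [Sum.elim_inl, Pi.zero_apply, Pi.neg_apply, neg_eq_zero] at hcf
        exact hcf
    · rintro ⟨h1, h2⟩
      have h3 : Kmat G *ᵥ Sum.elim (z ∘ Sum.inl) (z ∘ Sum.inr) = 0 := by
        rw [Kmat_mulVec_elim, h1, h2]
        funext s; cases s <;> simp
      rwa [Sum.elim_comp_inl_inr] at h3
  -- the kernel splits as a product
  let eker : Wk ≃ₗ[ℚ]
      (LinearMap.ker ((Nmat G)ᵀ.mulVecLin) × LinearMap.ker ((Nmat G).mulVecLin)) :=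
    { toFun := fun z =>
        (⟨(z : Simplex G → ℚ) ∘ Sum.inl, by
            rw [LinearMap.mem_ker, Matrix.mulVecLin_apply]
            exact ((hmemWk z).mp z.2).1⟩,
         ⟨(z : Simplex G → ℚ) ∘ Sum.inr, by
            rw [LinearMap.mem_ker, Matrix.mulVecLin_apply]
            exact ((hmemWk z).mp z.2).2⟩)
      map_add' := fun a b => by
        refine Prod.ext (Subtype.ext ?_) (Subtype.ext ?_) <;> rfl
      map_smul' := fun r a => by
        refine Prod.ext (Subtype.ext ?_) (Subtype.ext ?_) <;> rfl
      invFun := fun p =>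
        ⟨Sum.elim (p.1 : V → ℚ) (p.2 : G.edgeSet → ℚ), by
          rw [hmemWk]
          constructor
          · have := p.1.2
            rw [LinearMap.mem_ker, Matrix.mulVecLin_apply] at this
            simpa using this
          · have := p.2.2
            rw [LinearMap.mem_ker, Matrix.mulVecLin_apply] at this
            simpa using this⟩
      left_inv := fun z => Subtype.ext (Sum.elim_comp_inl_inr (z : Simplex G → ℚ))
      right_inv := fun p => by
        refine Prod.ext (Subtype.ext ?_) (Subtype.ext ?_) <;> rfl }
  -- dimension of the kernel is even
  obtain ⟨m, hm⟩ : ∃ m, finrank ℚ Wk = m + m := by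
    have e1 := LinearEquiv.finrank_eq eker
    rw [Module.finrank_prod] at e1
    have e2 := LinearMap.finrank_range_add_finrank_ker ((Nmat G).mulVecLin)
    have e3 := LinearMap.finrank_range_add_finrank_ker (((Nmat G)ᵀ).mulVecLin)
    rw [Module.finrank_fintype_fun_eq_card] at e2 e3
    have e4 : finrank ℚ (LinearMap.range ((Nmat G)ᵀ.mulVecLin))
        = finrank ℚ (LinearMap.range ((Nmat G).mulVecLin)) := Matrix.rank_transpose (Nmat G)
    refine ⟨l - finrank ℚ (LinearMap.range ((Nmat G).mulVecLin)), by omega⟩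
  let c : Basis (Fin m ⊕ Fin m) ℚ Wk :=
    (Module.finBasisOfFinrankEq ℚ Wk hm).reindex (finSumFinEquiv (m := m) (n := m)).symm
  let Cmat : Matrix (Simplex G) (Fin m ⊕ Fin m) ℚ :=
    Matrix.of fun s j => (c j : Simplex G → ℚ) s
  let S' : Matrix (Simplex G) (Simplex G) ℚ := Cmat * Matrix.J (Fin m) ℚ * Cmatᵀ
  refine ⟨Kmat G + S', ?_, ?_, ?_⟩
  · -- skew
    rw [transpose_add, Kmat_transpose, transpose_mul, transpose_mul, transpose_transpose,
      Matrix.J_transpose, neg_add]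
    congr 1
    simp only [Matrix.mul_neg, Matrix.neg_mul, Matrix.mul_assoc, neg_inj]
    rw [← Matrix.mul_assoc]
  · -- invertible
    have hKC0 : Kmat G * Cmat = 0 := by
      ext s j
      have hj := LinearMap.mem_ker.mp (c j).2
      rw [Matrix.mulVecLin_apply] at hj
      have hjs := congrFun hj s
      simp only [Matrix.mulVec, dotProduct, Pi.zero_apply] at hjs
      simpa [Matrix.mul_apply, Cmat] using hjs
    have hKS0 : Kmat G * S' = 0 := by
      calc Kmat G * (Cmat * Matrix.J (Fin m) ℚ * Cmatᵀ)
          = (Kmat G * Cmat) * Matrix.J (Fin m) ℚ * Cmatᵀ := by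
            simp only [Matrix.mul_assoc]
        _ = 0 := by rw [hKC0, Matrix.zero_mul, Matrix.zero_mul]
    have hCinj : ∀ w : (Fin m ⊕ Fin m) → ℚ, Cmat *ᵥ w = 0 → w = 0 := by
      intro w hw
      have hz : (∑ j, w j • (c j)) = (0 : Wk) := by
        apply Subtype.ext
        rw [AddSubmonoidClass.coe_finset_sum]
        funext s
        have hws := congrFun hw s
        simp only [Matrix.mulVec, dotProduct, Pi.zero_apply] at hws
        simp only [Finset.sum_apply, Pi.smul_apply, SetLike.val_smul, smul_eq_mul,
          ZeroMemClass.coe_zero, Pi.zero_apply]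
        rw [← hws]
        exact Finset.sum_congr rfl fun j _ => mul_comm _ _
      have hli := Fintype.linearIndependent_iff.mp c.linearIndependent w hz
      funext j; exact hli j
    rw [isUnit_iff_ne_zero]
    intro hdet0
    obtain ⟨v, hv0, hveq⟩ := (Matrix.exists_mulVec_eq_zero_iff).mpr hdet0
    have hsplit : Kmat G *ᵥ v + S' *ᵥ v = 0 := by rwa [← Matrix.add_mulVec]
    have hKSv : Kmat G *ᵥ (S' *ᵥ v) = 0 := by
      rw [Matrix.mulVec_mulVec, hKS0, Matrix.zero_mulVec]
    have horth : (S' *ᵥ v) ⬝ᵥ (Kmat G *ᵥ v) = 0 := by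
      rw [Matrix.dotProduct_mulVec]
      have hvm : (S' *ᵥ v) ᵥ* Kmat G = 0 := by
        rw [← transpose_transpose (Kmat G), Matrix.vecMul_transpose, Kmat_transpose,
          Matrix.neg_mulVec, hKSv, neg_zero]
      rw [hvm, zero_dotProduct]
    have hS'v0 : S' *ᵥ v = 0 := by
      have hdd : (S' *ᵥ v) ⬝ᵥ (Kmat G *ᵥ v + S' *ᵥ v) = 0 := by
        rw [hsplit, dotProduct_zero]
      rw [dotProduct_add, horth, zero_add] at hdd
      exact dotProduct_self_eq_zero.mp hdd
    have hKv : Kmat G *ᵥ v = 0 := by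
      have := hsplit; rwa [hS'v0, add_zero] at this
    have hvW : v ∈ Wk := LinearMap.mem_ker.mpr (by rw [Matrix.mulVecLin_apply]; exact hKv)
    set vk : Wk := ⟨v, hvW⟩ with hvk
    set a : (Fin m ⊕ Fin m) → ℚ := fun j => c.repr vk j with ha
    have hva : Cmat *ᵥ a = v := by
      have hsum := Basis.sum_repr c vk
      have h2 := congrArg (fun w : Wk => (w : Simplex G → ℚ)) hsum
      simp only [AddSubmonoidClass.coe_finset_sum] at h2
      funext s
      have h3 := congrFun h2 s
      simp only [Finset.sum_apply, Pi.smul_apply, SetLike.val_smul, smul_eq_mul] at h3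
      simp only [Matrix.mulVec, dotProduct]
      rw [show v s = (vk : Simplex G → ℚ) s from rfl, ← h3]
      exact Finset.sum_congr rfl fun j _ => mul_comm _ _
    have hS'vC : Cmat *ᵥ (Matrix.J (Fin m) ℚ *ᵥ (Cmatᵀ *ᵥ v)) = 0 := by
      rw [Matrix.mulVec_mulVec, Matrix.mulVec_mulVec]
      exact hS'v0
    have hJCv : Matrix.J (Fin m) ℚ *ᵥ (Cmatᵀ *ᵥ v) = 0 := hCinj _ hS'vC
    have hCv : Cmatᵀ *ᵥ v = 0 := by
      have h6 : Matrix.J (Fin m) ℚ *ᵥ (Matrix.J (Fin m) ℚ *ᵥ (Cmatᵀ *ᵥ v)) = 0 := by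
        rw [hJCv, Matrix.mulVec_zero]
      rw [Matrix.mulVec_mulVec, Matrix.J_squared] at h6
      have h8 : (-1 : Matrix (Fin m ⊕ Fin m) (Fin m ⊕ Fin m) ℚ) *ᵥ (Cmatᵀ *ᵥ v)
          = -(Cmatᵀ *ᵥ v) := by
        rw [Matrix.neg_mulVec, Matrix.one_mulVec]
      rw [h8, neg_eq_zero] at h6
      exact h6
    have hvv : v ⬝ᵥ v = 0 := by
      conv_lhs => rw [show v ⬝ᵥ v = v ⬝ᵥ (Cmat *ᵥ a) by rw [hva]]
      rw [Matrix.dotProduct_mulVec]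
      have h5 : v ᵥ* Cmat = 0 := by
        rw [← transpose_transpose Cmat, Matrix.vecMul_transpose, hCv]
      rw [h5, zero_dotProduct]
    exact hv0 (dotProduct_self_eq_zero.mp hvv)
  · -- invariance
    have hKC : ∀ j, Kmat G *ᵥ (fun s => Cmat s j) = 0 := by
      intro j
      have hj := LinearMap.mem_ker.mp (c j).2
      rw [Matrix.mulVecLin_apply] at hj
      exact hj
    have hMC : (connLQ G ^ 2) * Cmat = Cmat := by
      ext s j
      rw [Matrix.mul_apply]
      have hk := congrFun (ker_fix G (fun t => Cmat t j) (hKC j)) s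
      simp only [Matrix.mulVec, dotProduct] at hk
      exact hk
    have hCM : Cmatᵀ * (connLQ G ^ 2) = Cmatᵀ := by
      have := congrArg Matrix.transpose hMC
      rwa [transpose_mul, Msymm] at this
    rw [Matrix.mul_add, Matrix.add_mul, MKM]
    congr 1
    calc (connLQ G ^ 2) * (Cmat * Matrix.J (Fin m) ℚ * Cmatᵀ) * (connLQ G ^ 2)
        = ((connLQ G ^ 2) * Cmat) * Matrix.J (Fin m) ℚ * (Cmatᵀ * (connLQ G ^ 2)) := by
          simp only [pow_two, Matrix.mul_assoc]
      _ = Cmat * Matrix.J (Fin m) ℚ * Cmatᵀ := by rw [hMC, hCM]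


end Aux

open Matrix Module LinearMap

/-- Symplectic Kirby connection: if the total number `v + e` of simplices is even,
say `v + e = 2l`, then `L²` is similar over `ℚ` to a symplectic matrix. -/
theorem symplectic_kirby (l : ℕ)
    (h : Fintype.card V + Fintype.card G.edgeSet = 2 * l) :
    ∃ (eqv : Simplex G ≃ (Fin l ⊕ Fin l))
      (P : Matrix (Fin l ⊕ Fin l) (Fin l ⊕ Fin l) ℚ),
      IsUnit P ∧
        P⁻¹ * (Matrix.reindex eqv eqv (connLQ G ^ 2)) * P
          ∈ Matrix.symplecticGroup (Fin l) ℚ := by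
  classical
  obtain ⟨K', hskew, hdetK', hMKM'⟩ := exists_K' G l h
  have hcard : Fintype.card (Simplex G) = Fintype.card (Fin l ⊕ Fin l) := by
    simp only [Fintype.card_sum, Fintype.card_fin, h]
    omega
  let eqv : Simplex G ≃ (Fin l ⊕ Fin l) := Fintype.equivOfCardEq hcard
  set M'' : Matrix (Fin l ⊕ Fin l) (Fin l ⊕ Fin l) ℚ
    := Matrix.reindex eqv eqv (connLQ G ^ 2) with hM''
  set K'' : Matrix (Fin l ⊕ Fin l) (Fin l ⊕ Fin l) ℚ := Matrix.reindex eqv eqv K' with hK''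
  have hre : ∀ A B : Matrix (Simplex G) (Simplex G) ℚ,
      Matrix.reindex eqv eqv (A * B) = Matrix.reindex eqv eqv A * Matrix.reindex eqv eqv B := by
    intro A B
    simp only [Matrix.reindex_apply]
    rw [Matrix.submatrix_mul_equiv]
  have hMKM'' : M'' * K'' * M'' = K'' := by
    rw [hM'', hK'', ← hre, ← hre, hMKM']
  have hK''skew : K''ᵀ = -K'' := by
    rw [hK'', Matrix.reindex_apply, Matrix.transpose_submatrix, hskew]
    rfl
  have hK''det : IsUnit K''.det := by
    rw [hK'', Matrix.reindex_apply, Matrix.det_submatrix_equiv_self]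
    exact hdetK'
  have hM''symm : M''ᵀ = M'' := by
    rw [hM'', Matrix.reindex_apply, Matrix.transpose_submatrix, Msymm]
  -- the bilinear form of K''
  set Bf : LinearMap.BilinForm ℚ ((Fin l ⊕ Fin l) → ℚ) := Matrix.toBilin' K'' with hBf
  have haltB : Bf.IsAlt := by
    intro x
    have h1 : Bf x x = x ⬝ᵥ (K'' *ᵥ x) := Matrix.toBilin'_apply' _ _ _
    have h2 : x ⬝ᵥ (K'' *ᵥ x) = (K''ᵀ *ᵥ x) ⬝ᵥ x := by
      rw [Matrix.dotProduct_mulVec, ← Matrix.vecMul_transpose, Matrix.transpose_transpose]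
    have h3 : (K''ᵀ *ᵥ x) ⬝ᵥ x = -(x ⬝ᵥ (K'' *ᵥ x)) := by
      rw [hK''skew, Matrix.neg_mulVec, neg_dotProduct, dotProduct_comm]
    have h4 : x ⬝ᵥ (K'' *ᵥ x) = 0 := by
      have := h2.trans h3
      linarith
    rw [h1, h4]
  have hndB : Bf.Nondegenerate := by
    rw [hBf, Matrix.nondegenerate_toBilin'_iff, Matrix.nondegenerate_iff_det_ne_zero]
    exact hK''det.ne_zero
  have hdimB : finrank ℚ ((Fin l ⊕ Fin l) → ℚ) = 2 * l := by
    rw [Module.finrank_fintype_fun_eq_card, Fintype.card_sum, Fintype.card_fin]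
    omega
  obtain ⟨b, hb⟩ := exists_symplectic_basis l ((Fin l ⊕ Fin l) → ℚ) _ _ (inferInstance : FiniteDimensional ℚ ((Fin l ⊕ Fin l) → ℚ)) Bf haltB hndB hdimB
  set P : Matrix (Fin l ⊕ Fin l) (Fin l ⊕ Fin l) ℚ
    := (Pi.basisFun ℚ (Fin l ⊕ Fin l)).toMatrix b with hP
  have hPentry : ∀ i j, P i j = b j i := by
    intro i j
    rw [hP, Basis.toMatrix_apply, Pi.basisFun_repr]
  have hPunit : IsUnit P := by
    haveI := (Pi.basisFun ℚ (Fin l ⊕ Fin l)).invertibleToMatrix b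
    rw [hP]
    exact isUnit_of_invertible _
  have hPdet : IsUnit P.det := (Matrix.isUnit_iff_isUnit_det P).mp hPunit
  have hPJ : Pᵀ * K'' * P = Matrix.J (Fin l) ℚ := by
    ext i j
    have hbij := hb i j
    rw [hBf, Matrix.toBilin'_apply] at hbij
    calc (Pᵀ * K'' * P) i j
        = ∑ t, (∑ s, (b i) s * K'' s t) * (b j) t := by
          simp only [Matrix.mul_apply, Matrix.transpose_apply, hPentry]
      _ = ∑ s, ∑ t, (b i) s * K'' s t * (b j) t := by
          simp only [Finset.sum_mul]
          rw [Finset.sum_comm]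
      _ = Matrix.J (Fin l) ℚ i j := hbij
  refine ⟨eqv, P, hPunit, ?_⟩
  rw [SymplecticGroup.mem_iff', ← hM'']
  have hPT : (P⁻¹)ᵀ = Pᵀ⁻¹ := Matrix.transpose_nonsing_inv P
  have hPTdet : IsUnit Pᵀ.det := by rwa [Matrix.det_transpose]
  rw [← hPJ]
  rw [Matrix.transpose_mul, Matrix.transpose_mul, hPT, hM''symm]
  simp only [Matrix.mul_assoc]
  rw [Matrix.nonsing_inv_mul_cancel_left _ _ hPTdet,
    Matrix.mul_nonsing_inv_cancel_left _ _ hPdet]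
  have hfold : M'' * (K'' * (M'' * P)) = K'' * P := by
    calc M'' * (K'' * (M'' * P)) = (M'' * K'' * M'') * P := by simp only [Matrix.mul_assoc]
      _ = K'' * P := by rw [hMKM'']
  rw [hfold]
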